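/- Let G be a graph and let M be a lift of the cycle matroid M(G). Then G is a framework for M, and moreover for every pair of vertex-disjoint cycles C1, C2 of G, the set E(C1) ∪ E(C2) is dependent in M. -/

import Mathlib

open Set Matroid
open scoped Classical

namespace QuasiGraphicPaper

universe u v

/-- A finite multigraph: a set `V` of vertices (in an ambient type `α`), a set `E` of
edges (in an ambient type `β`), and an incidence function assigning to each edge an
unordered pair of endpoints; loop-edges and parallel edges are allowed. -/
structure Graph (α : Type u) (β : Type v) where
  V : Set α
  E : Set β
  ends : β → Sym2 α
  finV : V.Finite
  finE : E.Finite
  ends_mem : ∀ ⦃e⦄, e ∈ E → ∀ ⦃x⦄, x ∈ ends e → x ∈ V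

namespace Graph

variable {α : Type u} {β : Type v}

/-- `e` is a loop-edge of `G` at the vertex `v`. -/
def IsLoopAt (G : Graph α β) (e : β) (v : α) : Prop :=
  e ∈ G.E ∧ G.ends e = Sym2.diag v

/-- `loops_G(v)`: the set of loop-edges of `G` at `v`. -/
def loopsAt (G : Graph α β) (v : α) : Set β := {e | G.IsLoopAt e v}

/-- Two vertices are adjacent if some edge of `G` has them as its two endpoints. -/
def Adj (G : Graph α β) (u v : α) : Prop := ∃ e ∈ G.E, G.ends e = s(u, v)

/-- A graph is connected if any two of its vertices are joined by a walk.
(The graph with no vertices is connected.) -/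
def Connected (G : Graph α β) : Prop :=
  ∀ u ∈ G.V, ∀ v ∈ G.V, Relation.ReflTransGen G.Adj u v

/-- Delete a set `X` of vertices: remove the vertices in `X` and all edges meeting `X`. -/
def deleteVertices (G : Graph α β) (X : Set α) : Graph α β where
  V := G.V \ X
  E := {e ∈ G.E | ∀ x ∈ G.ends e, x ∉ X}
  ends := G.ends
  finV := G.finV.sdiff
  finE := G.finE.subset (sep_subset _ _)
  ends_mem := fun e he x hx => ⟨G.ends_mem he.1 hx, he.2 x hx⟩

/-- `G − v`: delete the single vertex `v`. -/
abbrev deleteVertex (G : Graph α β) (v : α) : Graph α β := G.deleteVertices {v}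

/-- `G − e`: delete the edge `e` (keeping all vertices). -/
def deleteEdge (G : Graph α β) (e : β) : Graph α β where
  V := G.V
  E := G.E \ {e}
  ends := G.ends
  finV := G.finV
  finE := G.finE.sdiff
  ends_mem := fun f hf x hx => G.ends_mem hf.1 hx

/-- `G[X]`: the subgraph of `G` with edge set `X` (intersected with `E(G)`) and
no isolated vertices. -/
def restrictEdges (G : Graph α β) (X : Set β) : Graph α β where
  V := {v | ∃ e ∈ X ∩ G.E, v ∈ G.ends e}
  E := X ∩ G.E
  ends := G.ends
  finV := G.finV.subset (by rintro v ⟨e, ⟨-, he⟩, hv⟩; exact G.ends_mem he hv)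
  finE := G.finE.subset inter_subset_right
  ends_mem := fun e he x hx => ⟨e, he, hx⟩

/-- The connected component of `G` containing the vertex `v`, as a graph. -/
def componentOf (G : Graph α β) (v : α) : Graph α β where
  V := {u ∈ G.V | Relation.ReflTransGen G.Adj v u}
  E := {e ∈ G.E | ∀ x ∈ G.ends e, Relation.ReflTransGen G.Adj v x}
  ends := G.ends
  finV := G.finV.subset (sep_subset _ _)
  finE := G.finE.subset (sep_subset _ _)
  ends_mem := fun e he x hx => ⟨G.ends_mem he.1 hx, he.2 x hx⟩

/-- `H` is a connected component of `G`. -/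
def IsComponentOf (H G : Graph α β) : Prop := ∃ v ∈ G.V, H = G.componentOf v

/-- The number of connected components of `G`. -/
noncomputable def ncomponents (G : Graph α β) : ℕ :=
  {H : Graph α β | H.IsComponentOf G}.ncard

/-- `G` has at most two connected components: among any three vertices, two are joined. -/
def AtMostTwoComponents (G : Graph α β) : Prop :=
  ∀ u ∈ G.V, ∀ v ∈ G.V, ∀ w ∈ G.V,
    Relation.ReflTransGen G.Adj u v ∨ Relation.ReflTransGen G.Adj u w ∨
      Relation.ReflTransGen G.Adj v w

/-- The degree of a vertex: loop-edges count twice. -/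
noncomputable def degree (G : Graph α β) (v : α) : ℕ :=
  ({e ∈ G.E | v ∈ G.ends e ∧ ¬ (G.ends e).IsDiag}).ncard +
    2 * ({e ∈ G.E | G.ends e = Sym2.diag v}).ncard

/-- `G` is a cycle: it is connected, has at least one edge, and every vertex has
degree two. -/
def IsCycleGraph (G : Graph α β) : Prop :=
  G.E.Nonempty ∧ G.Connected ∧ ∀ v ∈ G.V, G.degree v = 2

/-- `C` is (the edge set of) a cycle of `G`. -/
def CycleSet (G : Graph α β) (C : Set β) : Prop :=
  C ⊆ G.E ∧ (G.restrictEdges C).IsCycleGraph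

/-- A forest: a graph with no cycles (in particular no loop-edges). -/
def IsForest (G : Graph α β) : Prop := ∀ C, ¬ G.CycleSet C

/-- `H` is a subgraph of `G`. -/
def IsSubgraph (H G : Graph α β) : Prop := H.V ⊆ G.V ∧ H.E ⊆ G.E ∧ H.ends = G.ends

/-- `G` is `k`-connected if `G − X` is connected for every vertex set `X` with `|X| < k`. -/
def KConnected (G : Graph α β) (k : ℕ) : Prop :=
  ∀ X : Set α, X.encard < k → (G.deleteVertices X).Connected

/-- A theta: a `2`-connected graph with exactly two vertices of degree three, all
other vertices having degree two. -/
def IsTheta (H : Graph α β) : Prop :=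
  H.KConnected 2 ∧
    ∃ a ∈ H.V, ∃ b ∈ H.V, a ≠ b ∧ H.degree a = 3 ∧ H.degree b = 3 ∧
      ∀ v ∈ H.V, v ≠ a → v ≠ b → H.degree v = 2

/-- `G / e`: contract the non-loop edge `e` with endpoints `x` and `y`
(identifying `y` with `x` and deleting `e`). -/
noncomputable def contractEdge (G : Graph α β) (e : β) (x y : α) (he : e ∈ G.E)
    (hxy : G.ends e = s(x, y)) (hne : x ≠ y) : Graph α β where
  V := G.V \ {y}
  E := G.E \ {e}
  ends := fun f => (G.ends f).map (fun w => if w = y then x else w)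
  finV := G.finV.sdiff
  finE := G.finE.sdiff
  ends_mem := by
    rintro f ⟨hf, -⟩ z hz
    try dsimp only at hz
    rw [Sym2.mem_map] at hz
    obtain ⟨w, hw, rfl⟩ := hz
    by_cases hwy : w = y
    · rw [if_pos hwy]
      have hx : x ∈ G.ends e := by rw [hxy]; exact Sym2.mem_mk_left x y
      exact ⟨G.ends_mem he hx, by simp [hne]⟩
    · rw [if_neg hwy]
      exact ⟨G.ends_mem hf hw, by simp [hwy]⟩

/-- `G ∘ e`: for a loop-edge `e` at a vertex `v` which is the unique loop-edge at `v`,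
delete `v` and `e`, and replace every other edge `f = vw` at `v` by a loop-edge at `w`. -/
noncomputable def circ (G : Graph α β) (e : β) (v : α)
    (hno : ∀ f ∈ G.E, G.ends f = Sym2.diag v → f = e) : Graph α β where
  V := G.V \ {v}
  E := G.E \ {e}
  ends := fun f =>
    if h : f ∈ G.E ∧ f ≠ e ∧ v ∈ G.ends f then Sym2.diag (Sym2.Mem.other h.2.2)
    else G.ends f
  finV := G.finV.sdiff
  finE := G.finE.sdiff
  ends_mem := by
    rintro f ⟨hf, hfe⟩ z hz
    try dsimp only at hz
    have hfe' : f ≠ e := fun h' => hfe (by simp [h'])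
    by_cases h : f ∈ G.E ∧ f ≠ e ∧ v ∈ G.ends f
    · rw [dif_pos h] at hz
      have hze : z = Sym2.Mem.other h.2.2 := by
        have h2 : z ∈ s(Sym2.Mem.other h.2.2, Sym2.Mem.other h.2.2) := hz
        rw [Sym2.mem_iff] at h2
        tauto
      subst hze
      refine ⟨G.ends_mem hf (Sym2.other_mem h.2.2), ?_⟩
      simp only [mem_singleton_iff]
      intro hzv
      apply h.2.1
      apply hno f hf
      show G.ends f = s(v, v)
      rw [← Sym2.other_spec h.2.2, hzv]
    · rw [dif_neg h] at hz
      refine ⟨G.ends_mem hf hz, ?_⟩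
      simp only [mem_singleton_iff]
      intro hzv
      subst hzv
      exact h ⟨hf, hfe', hz⟩

end Graph

/-! ### Matroid notions -/

variable {α : Type u} {β : Type v}

/-- The rank `r_M(X)` of a set `X` in a matroid `M`: the maximum size of an
independent subset of `X`. -/
noncomputable def rank (M : Matroid β) (X : Set β) : ℕ :=
  (⨆ I ∈ {I : Set β | M.Indep I ∧ I ⊆ X}, I.encard).toNat

/-- `C` is a circuit of `M` : a minimal dependent set. -/
def IsCircuit (M : Matroid β) (C : Set β) : Prop :=
  M.Dep C ∧ ∀ D, D ⊂ C → M.Indep D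

/-- `M \ D` : delete the set `D` from the matroid `M`. -/
def deleteM (M : Matroid β) (D : Set β) : Matroid β := M ↾ (M.E \ D)

/-- `M / C` : contract the set `C` in the matroid `M`. -/
def contractM (M : Matroid β) (C : Set β) : Matroid β := (M✶ ↾ (M✶.E \ C))✶

/-- `G` is a weak framework for `M`: conditions (1)–(3). -/
def WeakFramework (G : Graph α β) (M : Matroid β) : Prop :=
  G.E = M.E ∧
  (∀ H : Graph α β, H.IsComponentOf G → rank M H.E ≤ H.V.ncard) ∧
  (∀ v ∈ G.V,
    M.closure (G.deleteVertex v).E ⊆ (G.deleteVertex v).E ∪ G.loopsAt v)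

/-- `G` is a framework for `M`: conditions (1)–(4). -/
def Framework (G : Graph α β) (M : Matroid β) : Prop :=
  WeakFramework G M ∧
    ∀ C, IsCircuit M C → (G.restrictEdges C).AtMostTwoComponents

/-- `M` is the cycle matroid `M(G)` of `G` : the ground set of `M` is `E(G)`, and the
circuits of `M` are exactly the edge sets of cycles of `G`. -/
def IsCycleMatroidOf (G : Graph α β) (M : Matroid β) : Prop :=
  M.E = G.E ∧ ∀ C, IsCircuit M C ↔ G.CycleSet C

/-- A matroid is graphic if it is the cycle matroid of some graph. -/
def Graphic (M : Matroid β) : Prop :=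
  ∃ (γ : Type v) (G : Graph γ β), IsCycleMatroidOf G M

/-- A matroid is quasi-graphic if it has a framework. -/
def QuasiGraphic (M : Matroid β) : Prop :=
  ∃ (γ : Type v) (G : Graph γ β), Framework G M

/-- `M` is a lift of `N` if some single-element extension `M'` of `M` satisfies
`M' \ e = M` and `M' / e = N`. -/
def IsLiftOf (M N : Matroid β) : Prop :=
  ∃ M' : Matroid (Option β), (none : Option β) ∈ M'.E ∧
    deleteM M' {none} = M.map some (Option.some_injective β).injOn ∧
    contractM M' {none} = N.map some (Option.some_injective β).injOn

/-- `M` is a lifted-graphic matroid: for some single-element extension `M'` of `M`,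
`M' / e` is graphic. -/
def LiftedGraphic (M : Matroid β) : Prop :=
  ∃ M' : Matroid (Option β), (none : Option β) ∈ M'.E ∧
    deleteM M' {none} = M.map some (Option.some_injective β).injOn ∧
    Graphic (contractM M' {none})

/-- `(M, V)` is a framed matroid: `V` is a basis of `M` and every element of `M` is
spanned by a subset of `V` with at most two elements. -/
def FramedMatroid {γ : Type u} (M : Matroid γ) (V : Set γ) : Prop :=
  M.IsBase V ∧ ∀ e ∈ M.E, ∃ S ⊆ V, S.ncard ≤ 2 ∧ e ∈ M.closure S

/-- `M` is a frame matroid: `M = M' \ V` for some framed matroid `(M', V)`. -/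
def FrameMatroid (M : Matroid β) : Prop :=
  ∃ (γ : Type v) (M' : Matroid (β ⊕ γ)) (V : Set (β ⊕ γ)),
    FramedMatroid M' V ∧
      deleteM M' V = M.map Sum.inl Sum.inl_injective.injOn

/-- `M` is `3`-connected: it has no `k`-separation for `k ≤ 2`. -/
def ThreeConnected (M : Matroid β) : Prop :=
  ∀ X ⊆ M.E, ∀ k : ℕ, k ≤ 2 → (k : ℕ∞) ≤ X.encard → (k : ℕ∞) ≤ (M.E \ X).encard →
    rank M M.E + k ≤ rank M X + rank M (M.E \ X)

/-- `M` is representable over some field. -/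
def Representable (M : Matroid β) : Prop :=
  ∃ (F : Type v) (_ : Field F) (W : Type v) (_ : AddCommGroup W) (_ : Module F W)
    (φ : β → W), ∀ I ⊆ M.E, (M.Indep I ↔ LinearIndependent F (fun x : I => φ x))

/-- A collection `B` of cycles of `G` satisfies the theta-property if there is no
theta-subgraph of `G` with exactly two of its three cycles in `B`. -/
def ThetaProperty (G : Graph α β) (B : Set (Set β)) : Prop :=
  ∀ H : Graph α β, H.IsSubgraph G → H.IsTheta →
    ∀ C1 C2 C3, H.CycleSet C1 → H.CycleSet C2 → H.CycleSet C3 →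
      C1 ≠ C2 → C2 ≠ C3 → C1 ≠ C3 → C1 ∈ B → C2 ∈ B → C3 ∈ B

section MatroidLemmas

variable {S : Matroid γ} {X Y I C : Set γ} {e f a : γ}

lemma exists_isCircuit_subset (hX : S.Dep X) (hfin : X.Finite) :
    ∃ C ⊆ X, IsCircuit S C := by
  suffices h : ∀ (n : ℕ) (X : Set γ), X.Finite → X.ncard ≤ n → S.Dep X →
      ∃ C ⊆ X, IsCircuit S C from h X.ncard X hfin le_rfl hX
  intro n
  induction n with
  | zero =>
    intro X hfin hn hX
    rw [Nat.le_zero, Set.ncard_eq_zero hfin] at hn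
    subst hn
    exact absurd S.empty_indep hX.not_indep
  | succ n IH =>
    intro X hfin hn hX
    by_cases h : ∀ Y, Y ⊂ X → S.Indep Y
    · exact ⟨X, Subset.rfl, hX, h⟩
    push_neg at h
    obtain ⟨Y, hYX, hYdep⟩ := h
    have hYdep' : S.Dep Y := ⟨hYdep, hYX.subset.trans hX.subset_ground⟩
    have hcard : Y.ncard ≤ n := by
      have := Set.ncard_lt_ncard hYX hfin
      omega
    obtain ⟨C, hCY, hC⟩ := IH Y (hfin.subset hYX.subset) hcard hYdep'
    exact ⟨C, hCY.trans hYX.subset, hC⟩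

lemma IsCircuit.diff_indep (hC : IsCircuit S C) (ha : a ∈ C) :
    S.Indep (C \ {a}) :=
  hC.2 _ ⟨diff_subset, fun h => ((h ha).2 rfl)⟩

lemma IsCircuit.mem_closure_diff (hC : IsCircuit S C) (ha : a ∈ C) :
    a ∈ S.closure (C \ {a}) := by
  have h1 := hC.diff_indep ha
  have h2 : S.Dep (insert a (C \ {a})) := by
    rw [Set.insert_diff_singleton, Set.insert_eq_self.mpr ha]
    exact hC.1
  exact ((h1.insert_dep_iff).mp h2).1

lemma exists_isCircuit_of_dep_insert (hI : S.Indep I) (hdep : S.Dep (insert f I))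
    (hfin : I.Finite) :
    ∃ C ⊆ insert f I, IsCircuit S C ∧ f ∈ C := by
  obtain ⟨C, hCsub, hC⟩ := exists_isCircuit_subset hdep (hfin.insert f)
  refine ⟨C, hCsub, hC, ?_⟩
  by_contra hfC
  exact hC.1.not_indep (hI.subset ((Set.subset_insert_iff_of_notMem hfC).mp hCsub))

lemma contractM_ground (S : Matroid γ) (e : γ) : (contractM S {e}).E = S.E \ {e} := rfl

lemma mem_ground_diff_of_ne {x : γ} (hx : x ∈ S.E) (hne : x ≠ e) : x ∈ S.E \ {e} :=
  ⟨hx, by simpa using hne⟩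

/-- Independence in the single-element contraction, nonloop case. -/
lemma contractM_indep_iff_of_nonloop (he : S.Indep {e}) {I : Set γ} :
    (contractM S {e}).Indep I ↔ I ⊆ S.E \ {e} ∧ S.Indep (insert e I) := by
  have heE : e ∈ S.E := he.subset_ground rfl
  have hdg : S✶.E \ {e} = S.E \ {e} := by rw [dual_ground]
  have hDsub : S.E \ {e} ⊆ S✶.E := by rw [dual_ground]; exact diff_subset
  rw [show contractM S {e} = (S✶ ↾ (S✶.E \ {e}))✶ from rfl, dual_indep_iff_exists']
  simp only [restrict_ground_eq, hdg]
  constructor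
  · rintro ⟨hIsub, B, hB, hdisj⟩
    rw [isBase_restrict_iff hDsub] at hB
    -- B is an S✶-base since D contains an S✶-base
    obtain ⟨Bs, hBs, heBs⟩ := he.exists_isBase_superset
    have hB' : S✶.IsBase (S.E \ Bs) := hBs.compl_isBase_dual
    have hB'D : S.E \ Bs ⊆ S.E \ {e} := fun x hx =>
      ⟨hx.1, by simp only [mem_singleton_iff]; rintro rfl; exact hx.2 (heBs rfl)⟩
    have hBbase : S✶.IsBase B := by
      refine hB.indep.isBase_of_ground_subset_closure ?_
      calc S✶.E = S✶.closure (S.E \ Bs) := hB'.closure_eq.symm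
        _ ⊆ S✶.closure B :=
          closure_subset_closure_of_subset_closure (hB'D.trans hB.subset_closure)
    have hBc : S.IsBase (S.E \ B) := hBbase.compl_isBase_of_dual
    refine ⟨hIsub, hBc.indep.subset ?_⟩
    rintro x (rfl | hxI)
    · exact ⟨heE, fun hxB => (hB.subset hxB).2 rfl⟩
    · exact ⟨(hIsub hxI).1, fun hxB => (hdisj.ne_of_mem hxI hxB) rfl⟩
  · rintro ⟨hIsub, hind⟩
    obtain ⟨Bs, hBs, hsub⟩ := hind.exists_isBase_superset
    have hB : S✶.IsBase (S.E \ Bs) := hBs.compl_isBase_dual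
    have hBD : S.E \ Bs ⊆ S.E \ {e} := fun x hx =>
      ⟨hx.1, by simp only [mem_singleton_iff]; rintro rfl; exact hx.2 (hsub (mem_insert _ I))⟩
    have hbasis : S✶.IsBasis (S.E \ Bs) (S.E \ {e}) := by
      refine hB.indep.isBasis_of_subset_of_subset_closure hBD ?_
      rw [hB.closure_eq, dual_ground]
      exact diff_subset
    refine ⟨hIsub, S.E \ Bs, ?_, ?_⟩
    · exact (isBase_restrict_iff hDsub).mpr hbasis
    · exact Set.disjoint_left.mpr fun x hxI hxB => hxB.2 (hsub (mem_insert_of_mem e hxI))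

/-- The single-element contraction of a loop equals the deletion. -/
lemma contractM_eq_deleteM_of_loop (heE : e ∈ S.E) (he : ¬ S.Indep {e}) :
    contractM S {e} = deleteM S {e} := by
  have hdg : S✶.E \ {e} = S.E \ {e} := by rw [dual_ground]
  have hDsub : S.E \ {e} ⊆ S✶.E := by rw [dual_ground]; exact diff_subset
  have hnotbase : ∀ B, S.IsBase B → e ∉ B := fun B hB heB =>
    he (hB.indep.subset (by simpa using heB))
  have hmemdual : ∀ B, S✶.IsBase B → e ∈ B := by
    intro B hB
    by_contra hx
    exact hnotbase _ hB.compl_isBase_of_dual ⟨heE, hx⟩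
  refine Matroid.ext_indep rfl ?_
  intro I hI
  rw [contractM_ground] at hI
  rw [show contractM S {e} = (S✶ ↾ (S✶.E \ {e}))✶ from rfl, dual_indep_iff_exists']
  simp only [restrict_ground_eq, hdg]
  rw [show deleteM S {e} = S ↾ (S.E \ {e}) from rfl, restrict_indep_iff]
  constructor
  · rintro ⟨hIsub, B, hB, hdisj⟩
    rw [isBase_restrict_iff hDsub] at hB
    obtain ⟨B₂, hB₂, hBB₂⟩ := hB.indep.exists_isBase_superset
    have hint : B₂ ∩ (S.E \ {e}) = B := by
      refine (hB.eq_of_subset_indep (hB₂.indep.subset inter_subset_left)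
        (subset_inter hBB₂ hB.subset) inter_subset_right).symm
    have hBc : S.IsBase (S.E \ B₂) := hB₂.compl_isBase_of_dual
    refine ⟨hBc.indep.subset fun x hxI => ⟨(hI hxI).1, fun hxB₂ => ?_⟩, hI⟩
    have hxD : x ∈ S.E \ {e} := hI hxI
    have : x ∈ B := by rw [← hint]; exact ⟨hxB₂, hxD⟩
    exact hdisj.ne_of_mem hxI this rfl
  · rintro ⟨hind, hIsub⟩
    obtain ⟨Bs, hBs, hsub⟩ := hind.exists_isBase_superset
    have hB₂ : S✶.IsBase (S.E \ Bs) := hBs.compl_isBase_dual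
    have heB₂ : e ∈ S.E \ Bs := ⟨heE, hnotbase _ hBs⟩
    set B := (S.E \ Bs) \ {e} with hBdef
    have hBind : S✶.Indep B := hB₂.indep.subset diff_subset
    have hBD : B ⊆ S.E \ {e} := fun x hx => ⟨hx.1.1, hx.2⟩
    have hbasis : S✶.IsBasis B (S.E \ {e}) := by
      refine hBind.isBasis_of_subset_of_subset_closure hBD ?_
      intro x hx
      by_contra hxcl
      have hxE : x ∈ S✶.E := by rw [dual_ground]; exact hx.1
      have hxB : x ∉ B := fun hxB => hxcl (S✶.mem_closure_of_mem' hxB hxE)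
      have hins : S✶.Indep (insert x B) := by
        rw [hBind.insert_indep_iff_of_notMem hxB]
        exact ⟨hxE, hxcl⟩
      obtain ⟨B₃, hB₃, hsub₃⟩ := hins.exists_isBase_superset
      have heB₃ : e ∈ B₃ := hmemdual _ hB₃
      have hB₂B₃ : S.E \ Bs ⊆ B₃ := by
        intro y hy
        rcases eq_or_ne y e with rfl | hye
        · exact heB₃
        · exact hsub₃ (mem_insert_of_mem x ⟨hy, hye⟩)
      have : S.E \ Bs = B₃ := hB₂.eq_of_subset_indep hB₃.indep hB₂B₃
      rw [this] at heB₂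
      exact hx.2 (by
        have hxB₃ : x ∈ B₃ := hsub₃ (mem_insert x B)
        -- x ∈ B₃ = S.E \ Bs, but also x ∉ B means x = e
        have : x ∈ S.E \ Bs := this ▸ hxB₃
        rcases eq_or_ne x e with rfl | hxe
        · rfl
        · exact absurd ⟨this, hxe⟩ hxB)
    refine ⟨hIsub, B, ?_, ?_⟩
    · exact (isBase_restrict_iff hDsub).mpr hbasis
    · exact Set.disjoint_left.mpr fun x hxI hxB => hxB.1.2 (hsub hxI)


lemma loop_mem_closure (heE : e ∈ S.E) (hnl : ¬ S.Indep {e}) (X : Set γ) :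
    e ∈ S.closure X := by
  have hdep : S.Dep (insert e (∅ : Set γ)) := by
    rw [dep_iff]
    exact ⟨by simpa using hnl, by simpa using heE⟩
  have := (S.empty_indep.insert_dep_iff.mp hdep).1
  exact S.closure_subset_closure (empty_subset X) this

lemma contract_basis_lemma (heE : e ∈ S.E) {K : Set γ} (hK : K ⊆ S.E \ {e}) :
    ∃ J ⊆ K, (contractM S {e}).Indep J ∧ K ⊆ S.closure (insert e J) ∧
      ∀ x ∈ S.E \ {e}, x ∉ J → x ∈ S.closure (insert e J) →
        (contractM S {e}).Dep (insert x J) := by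
  obtain ⟨J, hJ⟩ := (contractM S {e}).exists_isBasis K
    (by rw [contractM_ground]; exact hK)
  have hJK : J ⊆ K := hJ.subset
  have hJi : (contractM S {e}).Indep J := hJ.indep
  have hJD : J ⊆ S.E \ {e} := hJK.trans hK
  by_cases hnl : S.Indep {e}
  · have hSeJ : S.Indep (insert e J) :=
      ((contractM_indep_iff_of_nonloop hnl).mp hJi).2
    have key : ∀ x ∈ S.E \ {e}, x ∉ J →
        ((contractM S {e}).Dep (insert x J) ↔ x ∈ S.closure (insert e J)) := by
      intro x hxD hxJ
      have hxeJ : x ∉ insert e J := by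
        rintro (rfl | h)
        · exact hxD.2 rfl
        · exact hxJ h
      rw [dep_iff, contractM_indep_iff_of_nonloop hnl, contractM_ground]
      have hsub : insert x J ⊆ S.E \ {e} := insert_subset hxD hJD
      rw [Set.insert_comm]
      rw [hSeJ.insert_indep_iff_of_notMem hxeJ]
      constructor
      · rintro ⟨h1, -⟩
        by_contra hxcl
        exact h1 ⟨hsub, ⟨hxD.1, hxcl⟩⟩
      · intro hxcl
        exact ⟨fun h => h.2.2 hxcl, hsub⟩
    refine ⟨J, hJK, hJi, ?_, fun x hx hxJ hxcl => (key x hx hxJ).mpr hxcl⟩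
    intro x hxK
    by_cases hxJ : x ∈ J
    · exact S.mem_closure_of_mem' (mem_insert_of_mem e hxJ) (hK hxK).1
    · exact (key x (hK hxK) hxJ).mp (hJ.insert_dep ⟨hxK, hxJ⟩)
  · have hdel : contractM S {e} = S ↾ (S.E \ {e}) :=
      contractM_eq_deleteM_of_loop heE hnl
    have hJS : S.Indep J := by
      rw [hdel, restrict_indep_iff] at hJi
      exact hJi.1
    have hecl : e ∈ S.closure J := loop_mem_closure heE hnl J
    have hcl_eq : S.closure (insert e J) = S.closure J :=
      closure_insert_eq_of_mem_closure hecl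
    have key : ∀ x ∈ S.E \ {e}, x ∉ J →
        ((contractM S {e}).Dep (insert x J) ↔ x ∈ S.closure (insert e J)) := by
      intro x hxD hxJ
      rw [hcl_eq, hdel, restrict_dep_iff, hJS.insert_indep_iff_of_notMem hxJ]
      have hsub : insert x J ⊆ S.E \ {e} := insert_subset hxD hJD
      constructor
      · rintro ⟨h1, -⟩
        by_contra hxcl
        exact h1 ⟨hxD.1, hxcl⟩
      · intro hxcl
        exact ⟨fun h => h.2 hxcl, hsub⟩
    refine ⟨J, hJK, hJi, ?_, fun x hx hxJ hxcl => (key x hx hxJ).mpr hxcl⟩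
    intro x hxK
    by_cases hxJ : x ∈ J
    · exact S.mem_closure_of_mem' (mem_insert_of_mem e hxJ) (hK hxK).1
    · exact (key x (hK hxK) hxJ).mp (hJ.insert_dep ⟨hxK, hxJ⟩)

lemma exists_contract_circuit (heE : e ∈ S.E) {K : Set γ} (hK : K ⊆ S.E \ {e})
    (hfin : K.Finite) (hfD : f ∈ S.E \ {e}) (hfK : f ∉ K) (hfcl : f ∈ S.closure K) :
    ∃ C ⊆ insert f K, IsCircuit (contractM S {e}) C ∧ f ∈ C := by
  obtain ⟨J, hJK, hJi, hspan, hdep⟩ := contract_basis_lemma heE hK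
  have hfcl' : f ∈ S.closure (insert e J) :=
    closure_subset_closure_of_subset_closure hspan hfcl
  have hfJ : f ∉ J := fun h => hfK (hJK h)
  have hDep : (contractM S {e}).Dep (insert f J) := hdep f hfD hfJ hfcl'
  obtain ⟨C, hCs, hC, hfC⟩ := exists_isCircuit_of_dep_insert hJi hDep (hfin.subset hJK)
  exact ⟨C, hCs.trans (insert_subset_insert hJK), hC, hfC⟩

lemma encard_le_of_subset_closure (hI : S.Indep I) {T : Set γ} (hT : T ⊆ S.E)
    (hsub : I ⊆ S.closure T) : I.encard ≤ T.encard := by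
  obtain ⟨JT, hJT⟩ := S.exists_isBasis T
  have h1 : I ⊆ S.closure JT := by rwa [hJT.closure_eq_closure]
  obtain ⟨B, hB, hIB⟩ := hI.subset_isBasis_of_subset h1 (closure_subset_ground _ _)
  have h2 : S.IsBasis JT (S.closure JT) := hJT.indep.isBasis_closure
  have h3 := (hB.restrict_isBase).encard_eq_encard_of_isBase (h2.restrict_isBase)
  calc I.encard ≤ B.encard := encard_le_encard hIB
    _ = JT.encard := h3
    _ ≤ T.encard := encard_le_encard hJT.subset

lemma exists_contract_indep_encard (heE : e ∈ S.E) (hI : S.Indep I)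
    (hIsub : I ⊆ S.E \ {e}) :
    ∃ J ⊆ I, (contractM S {e}).Indep J ∧ I.encard ≤ J.encard + 1 := by
  obtain ⟨J, hJI, hJi, hspan, -⟩ := contract_basis_lemma heE hIsub
  refine ⟨J, hJI, hJi, ?_⟩
  have hT : insert e J ⊆ S.E :=
    insert_subset heE ((hJI.trans hIsub).trans diff_subset)
  calc I.encard ≤ (insert e J).encard := encard_le_of_subset_closure hI hT hspan
    _ ≤ J.encard + 1 := encard_insert_le _ _

lemma dep_union_of_contract_dep (heE : e ∈ S.E) {X Y : Set γ}
    (hX : X ⊆ S.E \ {e}) (hY : Y ⊆ S.E \ {e}) (hdisj : Disjoint X Y)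
    (hXd : (contractM S {e}).Dep X) (hYd : (contractM S {e}).Dep Y)
    (hfin : (X ∪ Y).Finite) : S.Dep (X ∪ Y) := by
  rw [dep_iff]
  refine ⟨fun hind => ?_, (union_subset hX hY).trans diff_subset⟩
  by_cases hnl : S.Indep {e}
  · have hXi : S.Indep X := hind.subset subset_union_left
    have hYi : S.Indep Y := hind.subset subset_union_right
    have hcl : ∀ Z : Set γ, Z ⊆ S.E \ {e} → S.Indep Z → (contractM S {e}).Dep Z →
        e ∈ S.closure Z := by
      intro Z hZD hZi hZd
      have h1 : ¬ S.Indep (insert e Z) := fun h =>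
        hZd.not_indep ((contractM_indep_iff_of_nonloop hnl).mpr ⟨hZD, h⟩)
      have h2 : S.Dep (insert e Z) :=
        ⟨h1, insert_subset heE (hZD.trans diff_subset)⟩
      exact (hZi.insert_dep_iff.mp h2).1
    have hXe : e ∈ S.closure X := hcl X hX hXi hXd
    have hYe : e ∈ S.closure Y := hcl Y hY hYi hYd
    have heZ : e ∉ X ∪ Y := fun h => by
      rcases h with h | h
      · exact (hX h).2 rfl
      · exact (hY h).2 rfl
    have hZdep : S.Dep (insert e (X ∪ Y)) := (hind.insert_dep_iff).mpr
      ⟨S.closure_subset_closure subset_union_left hXe, heZ⟩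
    obtain ⟨K, hKs, hK, heK⟩ := exists_isCircuit_of_dep_insert hind hZdep hfin
    have hKne : K ≠ {e} := fun h => hK.1.not_indep (h ▸ hnl)
    obtain ⟨a, haK, hae⟩ : ∃ a ∈ K, a ≠ e := by
      by_contra h
      push_neg at h
      exact hKne (Subset.antisymm (fun x hx => (h x hx)) (by simpa using heK))
    have haZ : a ∈ X ∪ Y := by
      rcases hKs haK with rfl | h
      · exact absurd rfl hae
      · exact h
    have hecl : e ∈ S.closure ((X ∪ Y) \ {a}) := by
      rcases haZ with haX | haY
      · have hsubY : Y ⊆ (X ∪ Y) \ {a} := by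
          intro y hy
          refine ⟨Or.inr hy, ?_⟩
          simp only [mem_singleton_iff]
          rintro rfl
          exact (hdisj.ne_of_mem haX hy) rfl
        exact S.closure_subset_closure hsubY hYe
      · have hsubX : X ⊆ (X ∪ Y) \ {a} := by
          intro y hy
          refine ⟨Or.inl hy, ?_⟩
          simp only [mem_singleton_iff]
          rintro rfl
          exact (hdisj.ne_of_mem hy haY) rfl
        exact S.closure_subset_closure hsubX hXe
    have hacl : a ∈ S.closure ((X ∪ Y) \ {a}) := by
      have h1 : a ∈ S.closure (K \ {a}) := hK.mem_closure_diff haK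
      have h2 : K \ {a} ⊆ insert e ((X ∪ Y) \ {a}) := by
        rintro x ⟨hxK, hxa⟩
        rcases hKs hxK with rfl | h
        · exact mem_insert _ _
        · exact mem_insert_of_mem _ ⟨h, hxa⟩
      have h3 : S.closure (K \ {a}) ⊆ S.closure (insert e ((X ∪ Y) \ {a})) :=
        S.closure_subset_closure h2
      rw [closure_insert_eq_of_mem_closure hecl] at h3
      exact h3 h1
    have hXYa : a ∉ (X ∪ Y) \ {a} := fun h => h.2 rfl
    have hind' : S.Indep (insert a ((X ∪ Y) \ {a})) := by
      rwa [Set.insert_diff_singleton, Set.insert_eq_self.mpr haZ]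
    rw [(hind.subset diff_subset).insert_indep_iff_of_notMem hXYa] at hind'
    exact hind'.2 hacl
  · rw [contractM_eq_deleteM_of_loop heE hnl] at hXd
    rw [show deleteM S {e} = S ↾ (S.E \ {e}) from rfl, restrict_dep_iff] at hXd
    exact hXd.1 (hind.subset subset_union_left)

end MatroidLemmas


section Transfer

lemma image_some_inj {X Y : Set β} (h : some '' X = some '' Y) : X = Y := by
  rw [← preimage_image_eq X (Option.some_injective β), h,
    preimage_image_eq _ (Option.some_injective β)]

lemma subset_image_some {A : Set (Option β)} {Z : Set β} (h : A ⊆ some '' Z) :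
    ∃ Z₀ ⊆ Z, A = some '' Z₀ := by
  refine ⟨some ⁻¹' A, ?_, ?_⟩
  · intro x hx
    obtain ⟨z, hz, hzx⟩ := h hx
    rwa [← (Option.some_injective β) hzx]
  · rw [Set.image_preimage_eq_of_subset]
    exact h.trans (image_subset_range _ _)

lemma map_some_indep_iff {N : Matroid β} {I : Set β} :
    (N.map some (Option.some_injective β).injOn).Indep (some '' I) ↔ N.Indep I := by
  constructor
  · intro h
    rw [map_indep_iff] at h
    obtain ⟨I₀, hI₀, hEq⟩ := h
    rwa [image_some_inj hEq]
  · intro h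
    exact h.map _ _

lemma map_some_dep_iff {N : Matroid β} {X : Set β} :
    (N.map some (Option.some_injective β).injOn).Dep (some '' X) ↔ N.Dep X := by
  constructor
  · intro h
    rw [map_dep_iff] at h
    obtain ⟨D₀, hD₀, hEq⟩ := h
    rwa [image_some_inj hEq]
  · intro h
    rw [map_dep_iff]
    exact ⟨X, h, rfl⟩

lemma map_some_isCircuit_iff {N : Matroid β} {Z : Set β} :
    IsCircuit (N.map some (Option.some_injective β).injOn) (some '' Z) ↔ IsCircuit N Z := by
  constructor
  · rintro ⟨hdep, hmin⟩
    refine ⟨map_some_dep_iff.mp hdep, fun D hD => ?_⟩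
    have hss : some '' D ⊂ some '' Z := by
      refine ⟨image_mono hD.subset, fun h => hD.ne (image_some_inj
        (Subset.antisymm (image_mono hD.subset) h))⟩
    exact map_some_indep_iff.mp (hmin _ hss)
  · rintro ⟨hdep, hmin⟩
    refine ⟨map_some_dep_iff.mpr hdep, fun D hD => ?_⟩
    obtain ⟨D₀, hD₀Z, rfl⟩ := subset_image_some hD.subset
    have hss : D₀ ⊂ Z := by
      refine ⟨hD₀Z, fun h => hD.ne (by rw [Subset.antisymm hD₀Z h])⟩
    exact map_some_indep_iff.mpr (hmin _ hss)

variable {M : Matroid β} {S : Matroid (Option β)}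

lemma del_ground_eq (hdel : deleteM S {none} = M.map some (Option.some_injective β).injOn) :
    some '' M.E = S.E \ {none} := by
  have := congrArg Matroid.E hdel
  rw [show (deleteM S {none}).E = S.E \ {none} from rfl] at this
  rw [this]
  rfl

lemma del_indep_iff (hdel : deleteM S {none} = M.map some (Option.some_injective β).injOn)
    {I : Set β} : M.Indep I ↔ S.Indep (some '' I) := by
  constructor
  · intro hI
    have h2 : (deleteM S {none}).Indep (some '' I) := by
      rw [hdel]
      exact map_some_indep_iff.mpr hI
    rw [show deleteM S {none} = S ↾ (S.E \ {none}) from rfl, restrict_indep_iff] at h2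
    exact h2.1
  · intro h
    have hsub : some '' I ⊆ S.E \ {none} := by
      rintro x hx
      refine ⟨h.subset_ground hx, ?_⟩
      obtain ⟨y, -, rfl⟩ := hx
      simp
    have h2 : (deleteM S {none}).Indep (some '' I) := by
      rw [show deleteM S {none} = S ↾ (S.E \ {none}) from rfl, restrict_indep_iff]
      exact ⟨h, hsub⟩
    rw [hdel] at h2
    exact map_some_indep_iff.mp h2

end Transfer

section GraphLemmas

lemma Graph.restrictEdges_E_eq (G : Graph α β) {J : Set β} (hJ : J ⊆ G.E) :
    (G.restrictEdges J).E = J :=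
  inter_eq_left.mpr hJ

lemma Graph.restrictEdges_ends (G : Graph α β) (J : Set β) :
    (G.restrictEdges J).ends = G.ends := rfl

lemma Graph.restrictEdges_V_subset (G : Graph α β) (J : Set β) :
    (G.restrictEdges J).V ⊆ G.V := by
  rintro v ⟨e, ⟨-, he⟩, hv⟩
  exact G.ends_mem he hv

lemma Graph.mem_restrictEdges_V {G : Graph α β} {J : Set β} {v : α} :
    v ∈ (G.restrictEdges J).V ↔ ∃ e ∈ J ∩ G.E, v ∈ G.ends e := Iff.rfl

lemma Graph.degree_restrictEdges (G : Graph α β) {J : Set β} (hJ : J ⊆ G.E) (v : α) :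
    (G.restrictEdges J).degree v =
      {e ∈ J | v ∈ G.ends e ∧ ¬ (G.ends e).IsDiag}.ncard +
        2 * {e ∈ J | G.ends e = Sym2.diag v}.ncard := by
  unfold Graph.degree
  rw [G.restrictEdges_E_eq hJ]
  rfl

lemma sym2_exists_rep (z : Sym2 α) : ∃ x y, z = s(x, y) := by
  induction z using Sym2.ind with
  | _ x y => exact ⟨x, y, rfl⟩

open Fin.NatCast Fin.CommRing in
/-- Building a cycle from a cyclically indexed family of edges. -/
lemma Graph.cycleSet_of_fun (G : Graph α β) {n : ℕ} (v : Fin (n+1) → α)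
    (e : Fin (n+1) → β) (hv : Function.Injective v) (he : Function.Injective e)
    (heE : ∀ i, e i ∈ G.E) (hends : ∀ i, G.ends (e i) = s(v i, v (i+1))) :
    G.CycleSet (Set.range e) := by
  have hsub : Set.range e ⊆ G.E := by rintro x ⟨i, rfl⟩; exact heE i
  have hEeq : (G.restrictEdges (Set.range e)).E = Set.range e :=
    G.restrictEdges_E_eq hsub
  have hVeq : (G.restrictEdges (Set.range e)).V = Set.range v := by
    ext x
    constructor
    · rintro ⟨g, ⟨⟨i, rfl⟩, -⟩, hx⟩
      rw [hends i, Sym2.mem_iff] at hx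
      rcases hx with rfl | rfl
      · exact ⟨i, rfl⟩
      · exact ⟨i + 1, rfl⟩
    · rintro ⟨i, rfl⟩
      exact ⟨e i, ⟨⟨i, rfl⟩, heE i⟩, by rw [hends i]; exact Sym2.mem_mk_left _ _⟩
  refine ⟨hsub, ⟨⟨e 0, ?_⟩, ?_, ?_⟩⟩
  · rw [hEeq]; exact ⟨0, rfl⟩
  · -- connectedness
    have hadj : ∀ i : Fin (n+1), (G.restrictEdges (Set.range e)).Adj (v i) (v (i+1)) :=
      fun i => ⟨e i, by rw [hEeq]; exact ⟨i, rfl⟩, hends i⟩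
    have haux : ∀ (i : Fin (n+1)) (k : ℕ),
        Relation.ReflTransGen (G.restrictEdges (Set.range e)).Adj (v i) (v (i + (k : Fin (n+1)))) := by
      intro i k
      induction k with
      | zero => simpa using Relation.ReflTransGen.refl
      | succ k IH =>
        have : ((( k+1 : ℕ)) : Fin (n+1)) = ((k : ℕ) : Fin (n+1)) + 1 := by
          push_cast
          ring
        rw [this, ← add_assoc]
        exact IH.tail (hadj _)
    intro x hx y hy
    rw [hVeq] at hx hy
    obtain ⟨i, rfl⟩ := hx
    obtain ⟨j, rfl⟩ := hy
    have h1 : i + (((j - i).val : ℕ) : Fin (n+1)) = j := by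
      rw [Fin.cast_val_eq_self]
      exact add_sub_cancel i j
    have := haux i (j - i).val
    rwa [h1] at this
  · -- degrees
    intro x hx
    rw [hVeq] at hx
    obtain ⟨i, rfl⟩ := hx
    rw [G.degree_restrictEdges hsub]
    rcases Nat.eq_zero_or_pos n with rfl | hn
    · -- single loop edge
      have huniq : ∀ j : Fin 1, j = 0 := fun j => Subsingleton.elim j 0
      have hre : Set.range e = {e 0} := by
        ext g
        constructor
        · rintro ⟨j, rfl⟩; rw [huniq j]; rfl
        · rintro rfl; exact ⟨0, rfl⟩
      have hdiag : G.ends (e 0) = Sym2.diag (v 0) := by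
        rw [hends 0, huniq 1]
        rfl
      have h1 : {g ∈ Set.range e | v i ∈ G.ends g ∧ ¬ (G.ends g).IsDiag} = ∅ := by
        ext g
        simp only [hre, mem_setOf_eq, mem_singleton_iff, mem_empty_iff_false, iff_false]
        rintro ⟨rfl, -, hnd⟩
        exact hnd (hdiag ▸ Sym2.diag_isDiag (v 0))
      have h2 : {g ∈ Set.range e | G.ends g = Sym2.diag (v i)} = {e 0} := by
        ext g
        simp only [hre, mem_setOf_eq, mem_singleton_iff]
        constructor
        · rintro ⟨rfl, -⟩; rfl
        · rintro rfl
          exact ⟨rfl, by rw [hdiag, huniq i]⟩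
      rw [h1, h2]
      simp
    · -- honest cycle, n ≥ 1
      have h10 : (1 : Fin (n+1)) ≠ 0 := by
        intro h
        have h' := congrArg Fin.val h
        rw [Fin.val_one', Nat.mod_eq_of_lt (by omega)] at h'
        simp at h'
      have hii1 : ∀ j : Fin (n+1), j ≠ j + 1 := by
        intro j h
        nth_rewrite 1 [show j = j + 0 by rw [add_zero]] at h
        have := add_left_cancel h
        exact h10 this.symm
      have hvne : ∀ j : Fin (n+1), v j ≠ v (j + 1) := fun j h => hii1 j (hv h)
      have hnd : ∀ j, ¬ (G.ends (e j)).IsDiag := by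
        intro j h
        rw [hends j, Sym2.mk_isDiag_iff] at h
        exact hvne j h
      have hmem : ∀ j : Fin (n+1), v i ∈ G.ends (e j) ↔ (j = i ∨ j = i - 1) := by
        intro j
        rw [hends j, Sym2.mem_iff]
        constructor
        · rintro (h | h)
          · exact Or.inl (hv h).symm
          · right
            have : i = j + 1 := hv h
            rw [this]
            ring
        · rintro (rfl | rfl)
          · exact Or.inl rfl
          · right
            congr 1
            ring
      have h1 : {g ∈ Set.range e | v i ∈ G.ends g ∧ ¬ (G.ends g).IsDiag}
          = {e i, e (i - 1)} := by
        ext g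
        simp only [mem_setOf_eq, mem_insert_iff, mem_singleton_iff]
        constructor
        · rintro ⟨⟨j, rfl⟩, hm, -⟩
          rcases (hmem j).mp hm with rfl | rfl
          · exact Or.inl rfl
          · exact Or.inr rfl
        · rintro (rfl | rfl)
          · exact ⟨⟨i, rfl⟩, (hmem i).mpr (Or.inl rfl), hnd i⟩
          · exact ⟨⟨i - 1, rfl⟩, (hmem (i-1)).mpr (Or.inr rfl), hnd (i-1)⟩
      have h2 : {g ∈ Set.range e | G.ends g = Sym2.diag (v i)} = ∅ := by
        ext g
        simp only [mem_setOf_eq, mem_empty_iff_false, iff_false]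
        rintro ⟨⟨j, rfl⟩, hd⟩
        exact hnd j (hd ▸ Sym2.diag_isDiag (v i))
      have hne2 : e i ≠ e (i - 1) := by
        intro h
        have h1 := he h
        exact hii1 (i - 1) (h1.symm.trans (show i = i - 1 + 1 by ring))
      rw [h1, h2, Set.ncard_pair hne2]
      simp

end GraphLemmas


section LeafLemma

/-- Adjacency via an edge set. -/
def adjJ (G : Graph α β) (J : Set β) (a b : α) : Prop := ∃ g ∈ J, G.ends g = s(a, b)

lemma adjJ_symm {G : Graph α β} {J : Set β} {a b : α} (h : adjJ G J a b) : adjJ G J b a := by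
  obtain ⟨g, hg, he⟩ := h
  exact ⟨g, hg, by rw [he, Sym2.eq_swap]⟩

lemma Graph.cycleSet_loop {G : Graph α β} {g : β} (hg : g ∈ G.E)
    (hd : (G.ends g).IsDiag) : G.CycleSet {g} := by
  obtain ⟨x, y, hxy⟩ := sym2_exists_rep (G.ends g)
  have hxy' : x = y := by rwa [hxy, Sym2.mk_isDiag_iff] at hd
  subst hxy'
  have := G.cycleSet_of_fun (n := 0) (fun _ => x) (fun _ => g)
    (fun u w _ => Fin.ext (by omega)) (fun u w _ => Fin.ext (by omega))
    (fun _ => hg) (fun _ => hxy)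
  rwa [Set.range_const] at this

/-- Leaf-extraction: a nonempty edge set with no cycle has a degree-one vertex. -/
lemma Graph.exists_leaf (G : Graph α β) {J : Set β} (hJE : J ⊆ G.E) (hne : J.Nonempty)
    (hnc : ∀ Z ⊆ J, ¬ G.CycleSet Z) :
    ∃ u ∈ (G.restrictEdges J).V, (G.restrictEdges J).degree u = 1 := by
  classical
  by_contra hno
  push_neg at hno
  haveI : Nonempty β := ⟨hne.choose⟩
  set VJ := (G.restrictEdges J).V with hVJ
  have hVfin : VJ.Finite := (G.restrictEdges J).finV
  have hJfin : J.Finite := G.finE.subset hJE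
  have noloop : ∀ g ∈ J, ¬ (G.ends g).IsDiag := by
    intro g hg hd
    exact hnc {g} (singleton_subset_iff.mpr hg) (Graph.cycleSet_loop (hJE hg) hd)
  have memV : ∀ g ∈ J, ∀ x ∈ G.ends g, x ∈ VJ :=
    fun g hg x hx => ⟨g, ⟨hg, hJE hg⟩, hx⟩
  set pick : α → α → β := fun a b => if h : adjJ G J a b then h.choose else Classical.arbitrary β
    with hpick
  have pick_spec : ∀ a b, adjJ G J a b → pick a b ∈ J ∧ G.ends (pick a b) = s(a, b) := by
    intro a b h
    rw [hpick]
    simp only [dif_pos h]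
    exact h.choose_spec
  have step1 : ∀ a ∈ VJ, ∀ g₀ : β, ∃ f ∈ J, f ≠ g₀ ∧ a ∈ G.ends f := by
    intro a ha g₀
    set A := {g ∈ J | a ∈ G.ends g ∧ ¬ (G.ends g).IsDiag} with hA
    have hAfin : A.Finite := hJfin.subset (sep_subset _ _)
    have hAne : A.Nonempty := by
      obtain ⟨g, ⟨hgJ, -⟩, hx⟩ := ha
      exact ⟨g, hgJ, hx, noloop g hgJ⟩
    have hdiag : {g ∈ J ∩ G.E | G.ends g = Sym2.diag a} = ∅ := by
      ext g
      simp only [mem_setOf_eq, mem_empty_iff_false, iff_false]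
      rintro ⟨⟨hgJ, -⟩, hd⟩
      exact noloop g hgJ (hd ▸ Sym2.diag_isDiag a)
    have hdeg : (G.restrictEdges J).degree a = A.ncard := by
      rw [G.degree_restrictEdges hJE]
      have h2 : {g ∈ J | G.ends g = Sym2.diag a} = ∅ := by
        ext g
        simp only [mem_setOf_eq, mem_empty_iff_false, iff_false]
        rintro ⟨hgJ, hd⟩
        exact noloop g hgJ (hd ▸ Sym2.diag_isDiag a)
      rw [h2]
      simp [hA]
    have h1 : 0 < A.ncard := (Set.ncard_pos hAfin).mpr hAne
    have hne1 : A.ncard ≠ 1 := fun h => hno a ha (by rw [hdeg, h])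
    have h2 : 1 < A.ncard := by omega
    obtain ⟨f, hfA, hfne⟩ := Set.exists_ne_of_one_lt_ncard h2 g₀
    exact ⟨f, hfA.1, hfne, hfA.2.1⟩
  have main : ∀ (k : ℕ) (l : List α), 2 ≤ l.length → l.Nodup →
      l.Chain' (adjJ G J) → (∀ x ∈ l, x ∈ VJ) → VJ.ncard < l.length + k → False := by
    intro k
    induction k with
    | zero =>
      intro l h2 hnd hch hmem hlt
      have hsub : ↑l.toFinset ⊆ VJ := by
        intro x hx
        simp only [List.coe_toFinset, mem_setOf_eq] at hx
        exact hmem x hx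
      have hle : (↑l.toFinset : Set α).ncard ≤ VJ.ncard := Set.ncard_le_ncard hsub hVfin
      rw [Set.ncard_coe_finset, List.toFinset_card_of_nodup hnd] at hle
      omega
    | succ k IH =>
      intro l h2 hnd hch hmem hlt
      obtain ⟨a, l1, rfl⟩ : ∃ a l1, l = a :: l1 := by
        cases l with
        | nil => simp at h2
        | cons a l1 => exact ⟨a, l1, rfl⟩
      obtain ⟨b, l2, rfl⟩ : ∃ b l2, l1 = b :: l2 := by
        cases l1 with
        | nil => simp at h2
        | cons b l2 => exact ⟨b, l2, rfl⟩
      have hab : adjJ G J a b := (List.isChain_cons_cons.mp hch).1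
      obtain ⟨f, hfJ, hfg, haf⟩ := step1 a (hmem a (by simp)) (pick a b)
      obtain ⟨w, hw⟩ : ∃ w, G.ends f = s(a, w) := Sym2.mem_iff_exists.mp haf
      have hwa : w ≠ a := by
        rintro rfl
        exact noloop f hfJ (by rw [hw]; simp)
      set L := a :: b :: l2 with hL
      by_cases hwl : w ∈ L
      · -- close off a cycle : contradiction with hnc
        have hex : ∃ k, ∃ (hk : k < L.length), L.get ⟨k, hk⟩ = w := by
          obtain ⟨⟨k, hk⟩, hget⟩ := List.mem_iff_get.mp hwl
          exact ⟨k, hk, hget⟩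
        set i := Nat.find hex with hi
        obtain ⟨hilt, hgeti⟩ := Nat.find_spec hex
        have hmin : ∀ m (hm : m < L.length), L.get ⟨m, hm⟩ = w → i ≤ m := by
          intro m hm hmw
          exact Nat.find_le ⟨hm, hmw⟩
        have hget0 : L.get ⟨0, by simp [hL]⟩ = a := rfl
        have hget1 : L.get ⟨1, by simp [hL]⟩ = b := rfl
        have hi1 : 1 ≤ i := by
          by_contra hcon
          push_neg at hcon
          have h0 : i = 0 := by omega
          have hia : L.get ⟨i, hilt⟩ = a := by
            rw [show (⟨i, hilt⟩ : Fin L.length) = ⟨0, by simp [hL]⟩ from Fin.ext h0]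
            exact hget0
          exact hwa (hgeti.symm.trans hia)
        -- vertex and edge functions
        have hvlt : ∀ t : Fin (i + 1), t.val < L.length := fun t => by
          have := t.isLt
          omega
        set v : Fin (i + 1) → α := fun t => L.get ⟨t.val, hvlt t⟩ with hv
        have hval1 : ((1 : Fin (i+1)) : ℕ) = 1 := by
          rw [Fin.val_one']
          exact Nat.mod_eq_of_lt (by omega)
        have hvaladd : ∀ t : Fin (i + 1), ((t + 1 : Fin (i+1)) : ℕ) = (t.val + 1) % (i + 1) := by
          intro t
          rw [Fin.add_def]
          simp [hval1]
        have hvaladd' : ∀ t : Fin (i + 1), t.val < i → ((t + 1 : Fin (i+1)) : ℕ) = t.val + 1 := by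
          intro t ht
          rw [hvaladd t]
          exact Nat.mod_eq_of_lt (by omega)
        have hchg := List.isChain_iff_getElem.mp hch
        have hadj : ∀ (t : Fin (i + 1)) (ht : t.val < i),
            adjJ G J (L.get ⟨t.val, hvlt t⟩)
              (L.get ⟨t.val + 1, by have := hilt; omega⟩) := by
          intro t ht
          exact hchg t.val (by have := hilt; omega)
        set e : Fin (i + 1) → β := fun t =>
          if h : t.val < i then pick (L.get ⟨t.val, hvlt t⟩) (L.get ⟨t.val + 1, by have := hilt; omega⟩)
          else f with he
        have hgetinj : ∀ (s t : ℕ) (hs : s < L.length) (ht : t < L.length),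
            L.get ⟨s, hs⟩ = L.get ⟨t, ht⟩ → s = t := by
          intro s t hs ht hEq
          have h := (List.Nodup.get_inj_iff hnd).mp hEq
          exact congrArg Fin.val h
        have hvinj : Function.Injective v := by
          intro s t hEq
          have := hgetinj s.val t.val _ _ hEq
          exact Fin.ext this
        have heJ : ∀ t, e t ∈ J := by
          intro t
          by_cases h : t.val < i
          · simp only [he, dif_pos h]
            exact (pick_spec _ _ (hadj t h)).1
          · simp only [he, dif_neg h]
            exact hfJ
        have hends : ∀ t : Fin (i+1), G.ends (e t) = s(v t, v (t + 1)) := by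
          intro t
          by_cases h : t.val < i
          · simp only [he, dif_pos h]
            rw [(pick_spec _ _ (hadj t h)).2]
            have h1 : v (t + 1) = L.get ⟨t.val + 1, by have := hilt; omega⟩ := by
              simp only [hv]
              congr 1
              exact Fin.ext (hvaladd' t h)
            have h0 : v t = L.get ⟨t.val, hvlt t⟩ := rfl
            rw [h1, h0]
          · simp only [he, dif_neg h]
            have hti : t.val = i := by have := t.isLt; omega
            have hvt : v t = w := by
              simp only [hv]
              rw [show (⟨t.val, hvlt t⟩ : Fin L.length) = ⟨i, hilt⟩ from Fin.ext hti]
              exact hgeti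
            have ht1 : ((t + 1 : Fin (i+1)) : ℕ) = 0 := by
              rw [hvaladd t, hti]
              simp
            have hvt1 : v (t + 1) = a := by
              simp only [hv]
              rw [show (⟨(t+1 : Fin (i+1)).val, hvlt _⟩ : Fin L.length)
                = ⟨0, by simp [hL]⟩ from Fin.ext ht1]
              exact hget0
            rw [hw, hvt, hvt1, Sym2.eq_swap]
        -- injectivity of e
        have hepickne : ∀ (s : Fin (i+1)) (hs : s.val < i), f ≠ pick (L.get ⟨s.val, hvlt s⟩)
            (L.get ⟨s.val + 1, by have := hilt; omega⟩) := by
          intro s hs hEq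
          have hps := (pick_spec _ _ (hadj s hs)).2
          rw [← hEq, hw] at hps
          rw [Sym2.eq_iff] at hps
          rcases hps with ⟨ha1, hw1⟩ | ⟨ha1, hw1⟩
          · -- a = L.get s, w = L.get (s+1)
            have hs0 : s.val = 0 := (hgetinj 0 s.val (by simp [hL]) _ (by rw [hget0, ha1])).symm
            have : i ≤ s.val + 1 := hmin _ _ hw1.symm
            have hi1' : i = 1 := by omega
            apply hfg
            rw [hEq]
            congr 1
            · rw [← hget0]
              congr 1
              simp [hs0]
            · refine Eq.trans ?_ hget1
              congr 1
              simp [hs0]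
          · -- a = L.get (s+1), w = L.get s
            have : i ≤ s.val := hmin _ _ hw1.symm
            omega
        have heinj : Function.Injective e := by
          intro s t hEq
          by_cases hsi : s.val < i <;> by_cases hti : t.val < i
          · simp only [he, dif_pos hsi, dif_pos hti] at hEq
            have hps := (pick_spec _ _ (hadj s hsi)).2
            have hpt := (pick_spec _ _ (hadj t hti)).2
            rw [hEq, hpt] at hps
            rw [Sym2.eq_iff] at hps
            rcases hps with ⟨h1, h2⟩ | ⟨h1, h2⟩
            · exact Fin.ext (hgetinj _ _ _ _ h1.symm)
            · have e1 := hgetinj _ _ _ _ h1.symm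
              have e2 := hgetinj _ _ _ _ h2.symm
              omega
          · exfalso
            simp only [he, dif_pos hsi, dif_neg hti] at hEq
            exact hepickne s hsi hEq.symm
          · exfalso
            simp only [he, dif_neg hsi, dif_pos hti] at hEq
            exact hepickne t hti hEq
          · have : s.val = i := by have := s.isLt; omega
            have h2 : t.val = i := by have := t.isLt; omega
            exact Fin.ext (by omega)
        have hcyc := G.cycleSet_of_fun v e hvinj heinj (fun t => hJE (heJ t)) hends
        refine hnc (Set.range e) ?_ hcyc
        rintro x ⟨t, rfl⟩
        exact heJ t
      · -- extend the path
        have hwV : w ∈ VJ := memV f hfJ w (by rw [hw]; simp)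
        refine IH (w :: L) (by simp [hL]) ?_ ?_ ?_ ?_
        · exact List.nodup_cons.mpr ⟨hwl, hnd⟩
        · refine List.isChain_cons_cons.mpr ?_
          refine ⟨⟨f, hfJ, by rw [hw, Sym2.eq_swap]⟩, hch⟩
        · intro x hx
          rcases List.mem_cons.mp hx with rfl | hx
          · exact hwV
          · exact hmem x hx
        · simp only [List.length_cons] at hlt ⊢
          omega
  obtain ⟨g₀, hg₀⟩ := hne
  obtain ⟨x, y, hxy⟩ := sym2_exists_rep (G.ends g₀)
  have hxyne : x ≠ y := by
    intro h
    exact noloop g₀ hg₀ (by rw [hxy, h]; simp)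
  refine main (VJ.ncard + 1) [x, y] (by simp) (by simp [hxyne]) ?_ ?_
    (by simp only [List.length_cons, List.length_nil]; omega)
  · refine List.isChain_cons_cons.mpr ⟨?_, List.isChain_singleton _⟩
    exact ⟨g₀, hg₀, hxy⟩
  · intro z hz
    rcases List.mem_cons.mp hz with rfl | hz
    · exact memV g₀ hg₀ z (by rw [hxy]; simp)
    · simp only [List.mem_singleton] at hz
      subst hz
      exact memV g₀ hg₀ z (by rw [hxy]; simp)

end LeafLemma


section MoreGraph

lemma sym2_mem_nonempty (z : Sym2 α) : ∃ x, x ∈ z := by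
  obtain ⟨x, y, rfl⟩ := sym2_exists_rep z
  exact ⟨x, Sym2.mem_mk_left x y⟩

lemma sym2_eq_diag_of_isDiag_of_mem {z : Sym2 α} {v : α} (hd : z.IsDiag) (hv : v ∈ z) :
    z = Sym2.diag v := by
  obtain ⟨x, y, rfl⟩ := sym2_exists_rep z
  rw [Sym2.mk_isDiag_iff] at hd
  subst hd
  rw [Sym2.mem_iff] at hv
  rcases hv with rfl | rfl <;> rfl

lemma Graph.adj_symm {G : Graph α β} {a b : α} (h : G.Adj a b) : G.Adj b a := by
  obtain ⟨g, hg, he⟩ := h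
  exact ⟨g, hg, by rw [he, Sym2.eq_swap]⟩

lemma Graph.degree_one_unique_edge (G : Graph α β) {J : Set β} (hJE : J ⊆ G.E) {u : α}
    (h1 : (G.restrictEdges J).degree u = 1) :
    ∃ f ∈ J, u ∈ G.ends f ∧ ¬ (G.ends f).IsDiag ∧ ∀ g ∈ J, u ∈ G.ends g → g = f := by
  rw [G.degree_restrictEdges hJE] at h1
  have hJfin : J.Finite := G.finE.subset hJE
  have hBfin : {g ∈ J | G.ends g = Sym2.diag u}.Finite := hJfin.subset (sep_subset _ _)
  have hA1 : {g ∈ J | u ∈ G.ends g ∧ ¬ (G.ends g).IsDiag}.ncard = 1 := by omega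
  have hB0 : {g ∈ J | G.ends g = Sym2.diag u}.ncard = 0 := by omega
  have hBe : {g ∈ J | G.ends g = Sym2.diag u} = ∅ := (Set.ncard_eq_zero hBfin).mp hB0
  obtain ⟨f, hfA⟩ := Set.ncard_eq_one.mp hA1
  have hfm : f ∈ {g ∈ J | u ∈ G.ends g ∧ ¬ (G.ends g).IsDiag} := hfA ▸ rfl
  refine ⟨f, hfm.1, hfm.2.1, hfm.2.2, ?_⟩
  intro g hg hug
  by_cases hd : (G.ends g).IsDiag
  · exfalso
    have : g ∈ {g ∈ J | G.ends g = Sym2.diag u} :=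
      ⟨hg, sym2_eq_diag_of_isDiag_of_mem hd hug⟩
    rw [hBe] at this
    exact this
  · have : g ∈ {g ∈ J | u ∈ G.ends g ∧ ¬ (G.ends g).IsDiag} := ⟨hg, hug, hd⟩
    rwa [hfA, mem_singleton_iff] at this

lemma Graph.acyclic_count (G : Graph α β) {J : Set β} (hJE : J ⊆ G.E)
    (hnc : ∀ Z ⊆ J, ¬ G.CycleSet Z) (hne : J.Nonempty) :
    J.ncard + 1 ≤ (G.restrictEdges J).V.ncard := by
  suffices h : ∀ (n : ℕ) (J : Set β), J ⊆ G.E → (∀ Z ⊆ J, ¬ G.CycleSet Z) → J.Nonempty →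
      J.ncard ≤ n → J.ncard + 1 ≤ (G.restrictEdges J).V.ncard from
    h J.ncard J hJE hnc hne le_rfl
  intro n
  induction n with
  | zero =>
    intro J hJE hnc hne hle
    have hJfin : J.Finite := G.finE.subset hJE
    rw [Nat.le_zero, Set.ncard_eq_zero hJfin] at hle
    exact absurd (hle ▸ hne) (by simp)
  | succ n IH =>
    intro J hJE hnc hne hle
    have hJfin : J.Finite := G.finE.subset hJE
    obtain ⟨u, huV, hdeg⟩ := G.exists_leaf hJE hne hnc
    obtain ⟨f, hfJ, huf, hnd, huniq⟩ := G.degree_one_unique_edge hJE hdeg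
    have hcard : (J \ {f}).ncard + 1 = J.ncard := Set.ncard_diff_singleton_add_one hfJ hJfin
    have hVfin : (G.restrictEdges J).V.Finite := (G.restrictEdges J).finV
    rcases (J \ {f}).eq_empty_or_nonempty with hJ'e | hJ'ne
    · obtain ⟨y, hy⟩ : ∃ y, G.ends f = s(u, y) := Sym2.mem_iff_exists.mp huf
      have hyu : u ≠ y := fun h => hnd (by rw [hy, ← h]; simp)
      have hsub2 : {u, y} ⊆ (G.restrictEdges J).V := by
        intro z hz
        rcases hz with rfl | hz
        · exact ⟨f, ⟨hfJ, hJE hfJ⟩, huf⟩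
        · rw [mem_singleton_iff] at hz
          subst hz
          exact ⟨f, ⟨hfJ, hJE hfJ⟩, by rw [hy]; simp⟩
      have h5 := Set.ncard_le_ncard hsub2 hVfin
      rw [Set.ncard_pair hyu] at h5
      have hJ1 : J.ncard = 1 := by
        have := Set.ncard_eq_zero hJfin.sdiff |>.mpr hJ'e
        omega
      omega
    · have hJ'sub : (J \ {f}) ⊆ G.E := diff_subset.trans hJE
      have hIH := IH (J \ {f}) hJ'sub (fun Z hZ => hnc Z (hZ.trans diff_subset)) hJ'ne
        (by omega)
      have hVsub : (G.restrictEdges (J \ {f})).V ⊆ (G.restrictEdges J).V \ {u} := by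
        rintro z ⟨g, ⟨hgJ', hgE⟩, hz⟩
        refine ⟨⟨g, ⟨hgJ'.1, hgE⟩, hz⟩, ?_⟩
        simp only [mem_singleton_iff]
        rintro rfl
        exact hgJ'.2 (huniq g hgJ'.1 hz)
      have h3 : ((G.restrictEdges J).V \ {u}).ncard + 1 = (G.restrictEdges J).V.ncard :=
        Set.ncard_diff_singleton_add_one huV hVfin
      have h4 : (G.restrictEdges (J \ {f})).V.ncard ≤ ((G.restrictEdges J).V \ {u}).ncard :=
        Set.ncard_le_ncard hVsub hVfin.sdiff
      omega

end MoreGraph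

section CircuitLeaf

variable {M N : Matroid β} {S : Matroid (Option β)}

lemma con_ground_eq {N : Matroid β} {S : Matroid (Option β)}
    (hcon : contractM S {none} = N.map some (Option.some_injective β).injOn) :
    some '' N.E = S.E \ {none} := by
  have h := congrArg Matroid.E hcon
  rw [contractM_ground] at h
  rw [h]
  rfl

lemma del_dep {M : Matroid β} {S : Matroid (Option β)}
    (hdel : deleteM S {none} = M.map some (Option.some_injective β).injOn)
    {X : Set β} (hX : M.Dep X) : S.Dep (some '' X) := by
  refine ⟨fun h => hX.not_indep ((del_indep_iff hdel).mpr h), ?_⟩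
  have := image_mono (f := some) hX.subset_ground
  rw [del_ground_eq hdel] at this
  exact this.trans diff_subset

/-- In the setting of a lift, no circuit of `M` has a "leaf" edge in `G`. -/
lemma no_leaf_in_circuit {G : Graph α β} {M N : Matroid β} {S : Matroid (Option β)}
    (hN : IsCycleMatroidOf G N)
    (hdel : deleteM S {none} = M.map some (Option.some_injective β).injOn)
    (hcon : contractM S {none} = N.map some (Option.some_injective β).injOn)
    (hnE : (none : Option β) ∈ S.E) (hGE : G.E = M.E)
    {K : Set β} (hK : IsCircuit M K) {f : β} {v : α}
    (hfK : f ∈ K) (hvf : v ∈ G.ends f) (hnd : G.ends f ≠ Sym2.diag v)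
    (honly : ∀ g ∈ K, v ∈ G.ends g → g = f) : False := by
  have hKE : K ⊆ M.E := hK.1.subset_ground
  have hKG : K ⊆ G.E := by rw [hGE]; exact hKE
  have hKfin : K.Finite := G.finE.subset hKG
  have hKi : M.Indep (K \ {f}) := hK.diff_indep hfK
  have hSi : S.Indep (some '' (K \ {f})) := (del_indep_iff hdel).mp hKi
  have hSd : S.Dep (some '' K) := del_dep hdel hK.1
  have hins : some '' K = insert (some f) (some '' (K \ {f})) := by
    conv_lhs => rw [← Set.insert_eq_self.mpr hfK, ← Set.insert_diff_singleton]
    rw [Set.image_insert_eq]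
  have hfcl : some f ∈ S.closure (some '' (K \ {f})) := by
    rw [hins] at hSd
    exact ((hSi.insert_dep_iff).mp hSd).1
  have hKsubD : some '' (K \ {f}) ⊆ S.E \ {none} := by
    rw [← del_ground_eq hdel]
    exact image_mono (f := some) (diff_subset.trans hKE)
  have hfD : some f ∈ S.E \ {none} := by
    rw [← del_ground_eq hdel]
    exact mem_image_of_mem some (hKE hfK)
  have hfnm : some f ∉ some '' (K \ {f}) := by
    rintro ⟨g, hg, hgf⟩
    rw [Option.some_injective β hgf] at hg
    exact hg.2 rfl
  obtain ⟨Cc, hCsub, hCc, hfCc⟩ := exists_contract_circuit hnE hKsubD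
    (hKfin.sdiff.image some) hfD hfnm hfcl
  have hCcK : Cc ⊆ some '' K := by
    rw [hins]
    exact hCsub
  obtain ⟨Z, hZK, rfl⟩ := subset_image_some hCcK
  rw [hcon] at hCc
  have hZcirc : IsCircuit N Z := map_some_isCircuit_iff.mp hCc
  have hZcyc : G.CycleSet Z := (hN.2 Z).mp hZcirc
  have hfZ : f ∈ Z := by
    obtain ⟨g, hg, hgf⟩ := hfCc
    rwa [← Option.some_injective β hgf]
  have hZG : Z ⊆ G.E := hZcyc.1
  have hvV : v ∈ (G.restrictEdges Z).V := ⟨f, ⟨hfZ, hZG hfZ⟩, hvf⟩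
  have hdeg2 : (G.restrictEdges Z).degree v = 2 := hZcyc.2.2.2 v hvV
  have hdeg1 : (G.restrictEdges Z).degree v = 1 := by
    rw [G.degree_restrictEdges hZG]
    have hndd : ¬ (G.ends f).IsDiag := fun h => hnd (sym2_eq_diag_of_isDiag_of_mem h hvf)
    have hA : {g ∈ Z | v ∈ G.ends g ∧ ¬ (G.ends g).IsDiag} = {f} := by
      ext g
      simp only [mem_setOf_eq, mem_singleton_iff]
      constructor
      · rintro ⟨hgZ, hvg, -⟩
        exact honly g (hZK hgZ) hvg
      · rintro rfl
        exact ⟨hfZ, hvf, hndd⟩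
    have hB : {g ∈ Z | G.ends g = Sym2.diag v} = ∅ := by
      ext g
      simp only [mem_setOf_eq, mem_empty_iff_false, iff_false]
      rintro ⟨hgZ, hd⟩
      have : g = f := honly g (hZK hgZ) (by rw [hd]; exact Sym2.mem_mk_left v v)
      subst this
      exact hnd hd
    rw [hA, hB]
    simp
  omega

end CircuitLeaf


/-- Let `G` be a graph and let `M` be a lift of the cycle matroid
`M(G)`. Then `G` is a framework for `M`, and moreover for every pair of vertex-disjoint
cycles `C1`, `C2` of `G`, the set `E(C1) ∪ E(C2)` is dependent in `M`. -/
theorem statement19 {α : Type u} {β : Type v} (G : Graph α β) (M N : Matroid β)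
    (hN : IsCycleMatroidOf G N) (hlift : IsLiftOf M N) :
    Framework G M ∧
      ∀ C1 C2 : Set β, G.CycleSet C1 → G.CycleSet C2 →
        (G.restrictEdges C1).V ∩ (G.restrictEdges C2).V = ∅ →
        M.Dep (C1 ∪ C2) := by
  obtain ⟨S, hnE, hdel, hcon⟩ := hlift
  have hMN : M.E = N.E :=
    image_some_inj ((del_ground_eq hdel).trans (con_ground_eq hcon).symm)
  have hGE : G.E = M.E := by rw [hMN, hN.1]
  have hcycdep : ∀ Z, G.CycleSet Z → N.Dep Z := fun Z hZ => ((hN.2 Z).mpr hZ).1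
  have hacyc : ∀ I, N.Indep I → ∀ Z ⊆ I, ¬ G.CycleSet Z :=
    fun I hI Z hZI hZ => ((hN.2 Z).mpr hZ).1.not_indep (hI.subset hZI)
  -- the key dependence tool
  have htool : ∀ Z1 Z2 : Set β, Z1 ⊆ G.E → Z2 ⊆ G.E → Disjoint Z1 Z2 →
      N.Dep Z1 → N.Dep Z2 → M.Dep (Z1 ∪ Z2) := by
    intro Z1 Z2 h1 h2 hdisj hd1 hd2
    have hS1 : (contractM S {none}).Dep (some '' Z1) := by
      rw [hcon]; exact map_some_dep_iff.mpr hd1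
    have hS2 : (contractM S {none}).Dep (some '' Z2) := by
      rw [hcon]; exact map_some_dep_iff.mpr hd2
    have hsub1 : some '' Z1 ⊆ S.E \ {none} := by
      rw [← del_ground_eq hdel]; exact image_mono (f := some) (hGE ▸ h1)
    have hsub2 : some '' Z2 ⊆ S.E \ {none} := by
      rw [← del_ground_eq hdel]; exact image_mono (f := some) (hGE ▸ h2)
    have hdisj' : Disjoint (some '' Z1) (some '' Z2) :=
      (Set.disjoint_image_iff (Option.some_injective β)).mpr hdisj
    have hfin : (some '' Z1 ∪ some '' Z2).Finite :=
      ((G.finE.subset h1).image some).union ((G.finE.subset h2).image some)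
    have hSd := dep_union_of_contract_dep hnE hsub1 hsub2 hdisj' hS1 hS2 hfin
    rw [← Set.image_union] at hSd
    refine ⟨fun hind => hSd.not_indep ((del_indep_iff hdel).mp hind), ?_⟩
    rw [← hGE]
    exact union_subset h1 h2
  -- condition (3)
  have cond3 : ∀ v ∈ G.V,
      M.closure (G.deleteVertex v).E ⊆ (G.deleteVertex v).E ∪ G.loopsAt v := by
    intro v hv x hx
    have hXE : (G.deleteVertex v).E ⊆ M.E := fun g hg => hGE ▸ hg.1
    by_cases hxX : x ∈ (G.deleteVertex v).E
    · exact Or.inl hxX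
    have hxE : x ∈ M.E := M.mem_ground_of_mem_closure hx
    have hxG : x ∈ G.E := hGE ▸ hxE
    have hvx : v ∈ G.ends x := by
      by_contra h
      exact hxX ⟨hxG, fun y hy hyv => h (mem_singleton_iff.mp hyv ▸ hy)⟩
    right
    refine ⟨hxG, ?_⟩
    by_contra hnd
    obtain ⟨J, hJ⟩ := M.exists_isBasis (G.deleteVertex v).E hXE
    have hxcl : x ∈ M.closure J := by rw [hJ.closure_eq_closure]; exact hx
    have hxJ : x ∉ J := fun h => hxX (hJ.subset h)
    have hdep : M.Dep (insert x J) := (hJ.indep.insert_dep_iff).mpr ⟨hxcl, hxJ⟩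
    have hJfin : J.Finite := G.finE.subset (fun g hg => (hJ.subset hg).1)
    obtain ⟨K, hKsub, hK, hxK⟩ := exists_isCircuit_of_dep_insert hJ.indep hdep hJfin
    refine no_leaf_in_circuit hN hdel hcon hnE hGE hK hxK hvx hnd ?_
    intro g hg hvg
    rcases hKsub hg with rfl | hgJ
    · rfl
    · exact absurd rfl ((hJ.subset hgJ).2 v hvg)
  -- condition (2)
  have cond2 : ∀ H : Graph α β, H.IsComponentOf G → rank M H.E ≤ H.V.ncard := by
    rintro H ⟨w, hw, rfl⟩
    have hHV : w ∈ (G.componentOf w).V := ⟨hw, Relation.ReflTransGen.refl⟩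
    have hHVfin : (G.componentOf w).V.Finite := (G.componentOf w).finV
    have hV1 : 1 ≤ (G.componentOf w).V.ncard := (Set.ncard_pos hHVfin).mpr ⟨w, hHV⟩
    have hbound : (⨆ I ∈ {I : Set β | M.Indep I ∧ I ⊆ (G.componentOf w).E}, I.encard)
        ≤ ((G.componentOf w).V.ncard : ℕ∞) := by
      refine iSup₂_le ?_
      rintro I ⟨hI, hIH⟩
      have hSi : S.Indep (some '' I) := (del_indep_iff hdel).mp hI
      have hIsub : some '' I ⊆ S.E \ {none} := by
        rw [← del_ground_eq hdel]
        exact image_mono (f := some) hI.subset_ground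
      obtain ⟨J', hJ'sub, hJ'i, hcard⟩ := exists_contract_indep_encard hnE hSi hIsub
      obtain ⟨J0, hJ0I, rfl⟩ := subset_image_some hJ'sub
      have hJ0N : N.Indep J0 := by
        rw [hcon] at hJ'i
        exact map_some_indep_iff.mp hJ'i
      have hJ0G : J0 ⊆ G.E := by
        have := hJ0N.subset_ground
        rwa [hN.1] at this
      have hJ0H : J0 ⊆ (G.componentOf w).E := hJ0I.trans hIH
      have hVsub : (G.restrictEdges J0).V ⊆ (G.componentOf w).V := by
        rintro y ⟨g, ⟨hgJ0, hgE⟩, hy⟩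
        exact ⟨G.ends_mem hgE hy, (hJ0H hgJ0).2 y hy⟩
      have hJ0fin : J0.Finite := G.finE.subset hJ0G
      have hJbound : J0.encard + 1 ≤ ((G.componentOf w).V.ncard : ℕ∞) := by
        rcases J0.eq_empty_or_nonempty with rfl | hJ0ne
        · simpa using (Nat.cast_le (α := ℕ∞)).mpr hV1
        · have hcount := G.acyclic_count hJ0G (hacyc _ hJ0N) hJ0ne
          have h2 : (G.restrictEdges J0).V.ncard ≤ (G.componentOf w).V.ncard :=
            Set.ncard_le_ncard hVsub hHVfin
          rw [← hJ0fin.cast_ncard_eq]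
          rw [show (1 : ℕ∞) = ((1 : ℕ) : ℕ∞) from rfl, ← Nat.cast_add]
          exact (Nat.cast_le (α := ℕ∞)).mpr (by omega)
      calc I.encard = (some '' I).encard :=
            ((Option.some_injective β).encard_image I).symm
        _ ≤ (some '' J0).encard + 1 := hcard
        _ = J0.encard + 1 := by rw [(Option.some_injective β).encard_image]
        _ ≤ ((G.componentOf w).V.ncard : ℕ∞) := hJbound
    have h := ENat.toNat_le_toNat hbound (by simp)
    rwa [ENat.toNat_coe] at h
  -- condition (4)
  have cond4 : ∀ C, IsCircuit M C → (G.restrictEdges C).AtMostTwoComponents := by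
    intro C hC
    have hCG : C ⊆ G.E := by rw [hGE]; exact hC.1.subset_ground
    have hRE : (G.restrictEdges C).E = C := G.restrictEdges_E_eq hCG
    set R := G.restrictEdges C with hR
    have hsymm : ∀ a b, Relation.ReflTransGen R.Adj a b → Relation.ReflTransGen R.Adj b a :=
      fun a b h => by
        haveI : Std.Symm R.Adj := ⟨fun _ _ hx => Graph.adj_symm hx⟩
        exact Std.Symm.symm (r := Relation.ReflTransGen R.Adj) _ _ h
    intro u hu v hv w hw
    by_contra hcontra
    push_neg at hcontra
    obtain ⟨huv, huw, hvw⟩ := hcontra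
    -- reachability classes
    have f1 : ∀ z : α, ∀ g ∈ C, ∀ x ∈ G.ends g, Relation.ReflTransGen R.Adj z x →
        ∀ y ∈ G.ends g, Relation.ReflTransGen R.Adj z y := by
      intro z g hg x hx hzx y hy
      obtain ⟨x', hx'⟩ : ∃ x', G.ends g = s(x, x') := Sym2.mem_iff_exists.mp hx
      rw [hx', Sym2.mem_iff] at hy
      rcases hy with rfl | rfl
      · exact hzx
      · exact hzx.tail ⟨g, by rw [hRE]; exact hg, hx'⟩
    set Au := {g ∈ C | ∀ x ∈ G.ends g, Relation.ReflTransGen R.Adj u x} with hAu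
    set Av := {g ∈ C | ∀ x ∈ G.ends g, Relation.ReflTransGen R.Adj v x} with hAv
    have hAuC : Au ⊆ C := sep_subset _ _
    have hAvC : Av ⊆ C := sep_subset _ _
    have hAune : Au.Nonempty := by
      obtain ⟨g, hgRE, hgu⟩ := hu
      exact ⟨g, hgRE.1, f1 u g hgRE.1 u hgu Relation.ReflTransGen.refl⟩
    have hAvne : Av.Nonempty := by
      obtain ⟨g, hgRE, hgv⟩ := hv
      exact ⟨g, hgRE.1, f1 v g hgRE.1 v hgv Relation.ReflTransGen.refl⟩
    have hdisj : Disjoint Au Av := by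
      rw [Set.disjoint_left]
      rintro g ⟨hgC, hgu⟩ ⟨-, hgv⟩
      obtain ⟨x, hx⟩ := sym2_mem_nonempty (G.ends g)
      exact huv ((hgu x hx).trans (hsymm _ _ (hgv x hx)))
    obtain ⟨gw, hgwRE, hgww⟩ := hw
    have hgwAu : gw ∉ Au := by
      rintro ⟨-, hgu⟩
      exact huw (hgu w hgww)
    have hgwAv : gw ∉ Av := by
      rintro ⟨-, hgv⟩
      exact hvw (hgv w hgww)
    -- each class contains a cycle
    have hcyc_in : ∀ z : α, ∀ A : Set β, A = {g ∈ C | ∀ x ∈ G.ends g,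
        Relation.ReflTransGen R.Adj z x} → A.Nonempty → ∃ Z ⊆ A, G.CycleSet Z := by
      intro z A hAdef hAne
      by_contra hno
      push_neg at hno
      have hAC : A ⊆ C := hAdef ▸ sep_subset _ _
      have hAG : A ⊆ G.E := hAC.trans hCG
      obtain ⟨x, hxV, hxdeg⟩ := G.exists_leaf hAG hAne (fun Z hZ hZc => hno Z hZ hZc)
      obtain ⟨f, hfA, hxf, hfnd, huniq⟩ := G.degree_one_unique_edge hAG hxdeg
      have hzx : Relation.ReflTransGen R.Adj z x := by
        have hfA' : f ∈ {g ∈ C | ∀ x ∈ G.ends g, Relation.ReflTransGen R.Adj z x} :=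
          hAdef ▸ hfA
        exact hfA'.2 x hxf
      have hCatx : ∀ g ∈ C, x ∈ G.ends g → g = f := by
        intro g hg hxg
        refine huniq g ?_ hxg
        rw [hAdef]
        exact ⟨hg, f1 z g hg x hxg hzx⟩
      exact no_leaf_in_circuit hN hdel hcon hnE hGE hC (hAC hfA) hxf
        (fun h => hfnd (h ▸ Sym2.diag_isDiag x)) hCatx
    obtain ⟨Z1, hZ1Au, hZ1c⟩ := hcyc_in u Au hAu hAune
    obtain ⟨Z2, hZ2Av, hZ2c⟩ := hcyc_in v Av hAv hAvne
    have hZdisj : Disjoint Z1 Z2 := hdisj.mono hZ1Au hZ2Av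
    have hMdep : M.Dep (Z1 ∪ Z2) := htool Z1 Z2 hZ1c.1 hZ2c.1 hZdisj
      (hcycdep _ hZ1c) (hcycdep _ hZ2c)
    have hss : Z1 ∪ Z2 ⊂ C := by
      refine ⟨union_subset (hZ1Au.trans hAuC) (hZ2Av.trans hAvC), fun hsup => ?_⟩
      rcases hsup hgwRE.1 with h | h
      · exact hgwAu (hZ1Au h)
      · exact hgwAv (hZ2Av h)
    exact hMdep.not_indep (hC.2 _ hss)
  refine ⟨⟨⟨hGE, cond2, cond3⟩, cond4⟩, ?_⟩
  -- vertex-disjoint cycles are dependent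
  intro C1 C2 h1 h2 hVdisj
  have hdisj : Disjoint C1 C2 := by
    rw [Set.disjoint_left]
    intro g hg1 hg2
    obtain ⟨x, hx⟩ := sym2_mem_nonempty (G.ends g)
    have hx1 : x ∈ (G.restrictEdges C1).V := ⟨g, ⟨hg1, h1.1 hg1⟩, hx⟩
    have hx2 : x ∈ (G.restrictEdges C2).V := ⟨g, ⟨hg2, h2.1 hg2⟩, hx⟩
    have : x ∈ (G.restrictEdges C1).V ∩ (G.restrictEdges C2).V := ⟨hx1, hx2⟩
    rw [hVdisj] at this
    exact this
  exact htool C1 C2 h1.1 h2.1 hdisj (hcycdep _ h1) (hcycdep _ h2)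


end QuasiGraphicPaper
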